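/- If F is a finite family of continuous self-maps of a complete metric space (X,d) such that the family oscillations satisfy lim_{n→∞} dω_{F^n}(t) = 0 for all t > 0 (F is eventually contracting), then there exists a nonempty compact set K ⊆ X with F(K) ⊆ K, where F(K) = ⋃_{f∈F} f(K). -/

import Mathlib

open Filter Topology ENNReal

/-- The set `F^n` of all compositions of `n` members of a family `F` of self-maps. -/
def comps {X : Type*} (F : Set (X → X)) : ℕ → Set (X → X)
  | 0 => {id}
  | n + 1 => Set.image2 (· ∘ ·) (comps F n) F

/-- The oscillation of a family `G` of self-maps of a metric space. -/
noncomputable def oscFam {X : Type*} [MetricSpace X] (G : Set (X → X)) (t : ℝ≥0∞) : ℝ≥0∞ :=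
  ⨆ g ∈ G, ⨆ (x : X) (y : X) (_ : edist x y ≤ t), edist (g x) (g y)

namespace EventuallyContractingAux

open EMetric TopologicalSpace Set

/-- Oscillation of the iterates of a single self-map of an emetric space. -/
noncomputable def osc1 {Y : Type*} [EMetricSpace Y] (T : Y → Y) (n : ℕ) (t : ℝ≥0∞) : ℝ≥0∞ :=
  ⨆ (x : Y) (y : Y) (_ : edist x y ≤ t), edist (T^[n] x) (T^[n] y)

theorem le_osc1 {Y : Type*} [EMetricSpace Y] (T : Y → Y) (n : ℕ) {t : ℝ≥0∞} {x y : Y}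
    (h : edist x y ≤ t) : edist (T^[n] x) (T^[n] y) ≤ osc1 T n t :=
  le_iSup_of_le x <| le_iSup_of_le y <| le_iSup_of_le h le_rfl

/-- Crux lemma: a single eventually contracting map has bounded orbits. -/
theorem bounded_orbit {Y : Type*} [EMetricSpace Y] (hfe : ∀ a b : Y, edist a b ≠ ⊤)
    (T : Y → Y) (y₀ : Y)
    (hosc : ∀ t : ℝ≥0∞, 0 < t → t ≠ ⊤ → Tendsto (fun n => osc1 T n t) atTop (𝓝 0)) :
    ∃ C : ℝ≥0∞, C ≠ ⊤ ∧ ∀ n, edist (T^[n] y₀) y₀ ≤ C := by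
  set y : ℕ → Y := fun n => T^[n] y₀ with hy
  by_cases hb0 : T y₀ = y₀
  · exact ⟨0, by simp, fun n => by simp [hy, Function.iterate_fixed hb0]⟩
  set b : ℝ≥0∞ := edist (T y₀) y₀ with hbdef
  have hbne : b ≠ 0 := fun h => hb0 (edist_eq_zero.1 h)
  have hb : 0 < b := pos_iff_ne_zero.2 hbne
  have hbtop : b ≠ ⊤ := hfe _ _
  have h4pos : (0 : ℝ≥0∞) < 4 * b := ENNReal.mul_pos (by norm_num) hbne
  have h4top : (4 : ℝ≥0∞) * b ≠ ⊤ := ENNReal.mul_ne_top (by norm_num) hbtop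
  obtain ⟨N₁, hN₁⟩ : ∃ N, ∀ n ≥ N, osc1 T n (4 * b) < b :=
    eventually_atTop.1 ((hosc (4 * b) h4pos h4top).eventually_lt_const hb)
  set c : ℝ≥0∞ := ((2 * N₁ + 1 : ℕ) : ℝ≥0∞) with hcdef
  have hc0 : c ≠ 0 := by
    simp [hcdef]
  have hctop : c ≠ ⊤ := ENNReal.natCast_ne_top _
  set η : ℝ≥0∞ := b / c with hηdef
  have hη : 0 < η := ENNReal.div_pos hbne hctop
  obtain ⟨N₂, hN₂⟩ : ∃ N, ∀ n ≥ N, osc1 T n b < η :=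
    eventually_atTop.1 ((hosc b hb hbtop).eventually_lt_const hη)
  have step : ∀ j, N₂ ≤ j → edist (y (j + 1)) (y j) ≤ η := by
    intro j hj
    have h1 : y (j + 1) = T^[j] (T y₀) := Function.iterate_succ_apply T j y₀
    have h2 : edist (T^[j] (T y₀)) (T^[j] y₀) ≤ osc1 T j b := le_osc1 T j le_rfl
    rw [h1]
    exact le_of_lt (lt_of_le_of_lt h2 (hN₂ j hj))
  by_contra hcon
  push_neg at hcon
  set k : ℕ := N₂ + N₁ with hkdef
  set S : ℝ≥0∞ := ∑ i ∈ Finset.range k, edist (y i) (y (i + 1)) with hSdef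
  have hStop : S ≠ ⊤ := by
    refine (ENNReal.sum_lt_top.2 fun i _ => ?_).ne
    exact lt_top_iff_ne_top.2 (hfe _ _)
  have hyk0 : edist (y k) (y 0) ≤ S := by
    rw [edist_comm, hSdef, Finset.range_eq_Ico]
    exact edist_le_Ico_sum_edist y (Nat.zero_le k)
  have hexists : ∃ l, 2 * b < edist (y k) (y (k + l)) := by
    by_contra hno
    push_neg at hno
    obtain ⟨m, hm⟩ := hcon (2 * b + S)
      (ENNReal.add_ne_top.2 ⟨ENNReal.mul_ne_top (by norm_num) hbtop, hStop⟩)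
    have hbound : edist (y m) y₀ ≤ 2 * b + S := by
      rcases le_or_gt k m with hkm | hmk
      · calc edist (y m) y₀ ≤ edist (y m) (y k) + edist (y k) (y 0) := edist_triangle _ _ _
          _ ≤ 2 * b + S := by
              refine add_le_add ?_ hyk0
              rw [edist_comm]
              have := hno (m - k)
              rwa [Nat.add_sub_cancel' hkm] at this
      · have h1 : edist (y 0) (y m) ≤ ∑ i ∈ Finset.Ico 0 m, edist (y i) (y (i + 1)) :=
          edist_le_Ico_sum_edist y (Nat.zero_le m)
        have h2 : (∑ i ∈ Finset.Ico 0 m, edist (y i) (y (i + 1))) ≤ S := by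
          rw [hSdef, Finset.range_eq_Ico]
          exact Finset.sum_le_sum_of_subset (Finset.Ico_subset_Ico le_rfl hmk.le)
        calc edist (y m) y₀ = edist (y 0) (y m) := edist_comm _ _
          _ ≤ S := h1.trans h2
          _ ≤ 2 * b + S := le_add_self
    exact absurd hm (not_lt.2 hbound)
  set l₀ : ℕ := Nat.find hexists with hl₀def
  have hspec : 2 * b < edist (y k) (y (k + l₀)) := Nat.find_spec hexists
  have hl₀ne : l₀ ≠ 0 := by
    intro h0
    rw [h0] at hspec
    have h00 : edist (y k) (y (k + 0)) = 0 := by rw [Nat.add_zero, edist_self]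
    exact absurd (h00 ▸ hspec) (not_lt.2 zero_le)
  obtain ⟨μ, hμ⟩ := Nat.exists_eq_succ_of_ne_zero hl₀ne
  have hmin : edist (y k) (y (k + μ)) ≤ 2 * b :=
    not_lt.1 (Nat.find_min hexists (by omega))
  have hv : edist (y k) (y (k + l₀)) ≤ 2 * b + η := by
    calc edist (y k) (y (k + l₀))
        ≤ edist (y k) (y (k + μ)) + edist (y (k + μ)) (y (k + μ + 1)) := by
          rw [show k + l₀ = k + μ + 1 by omega]
          exact edist_triangle _ _ _
      _ ≤ 2 * b + η := by
          refine add_le_add hmin ?_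
          rw [edist_comm]
          exact step (k + μ) (by omega)
  set H : ℕ → ℝ≥0∞ := fun i => edist (y (N₂ + i)) (y (N₂ + i + l₀)) with hHdef
  have hHN₁ : H N₁ = edist (y k) (y (k + l₀)) := rfl
  have hH0 : 4 * b < H 0 := by
    by_contra hle
    push_neg at hle
    have hyk' : y k = T^[N₁] (y N₂) := by
      rw [hy, hkdef, Nat.add_comm N₂ N₁]
      exact Function.iterate_add_apply T N₁ N₂ y₀
    have hyk'' : y (k + l₀) = T^[N₁] (y (N₂ + l₀)) := by
      rw [hy, hkdef, show N₂ + N₁ + l₀ = N₁ + (N₂ + l₀) by omega]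
      exact Function.iterate_add_apply T N₁ (N₂ + l₀) y₀
    have hpair : edist (y k) (y (k + l₀)) ≤ osc1 T N₁ (4 * b) := by
      rw [hyk', hyk'']
      exact le_osc1 T N₁ (by simpa [hHdef] using hle)
    have h1 : edist (y k) (y (k + l₀)) < b := lt_of_le_of_lt hpair (hN₁ N₁ le_rfl)
    have h2 : 2 * b < b := hspec.trans h1
    have h3 : b ≤ 2 * b := by
      rw [two_mul]; exact le_self_add
    exact absurd (h2.trans_le h3) (lt_irrefl _)
  have hchain : ∀ i : ℕ, H 0 ≤ H i + 2 * (i : ℝ≥0∞) * η := by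
    intro i
    induction i with
    | zero => simp
    | succ i ih =>
      have hstep : H i ≤ H (i + 1) + 2 * η := by
        have t1 : edist (y (N₂ + i)) (y (N₂ + i + 1)) ≤ η := by
          rw [edist_comm]; exact step (N₂ + i) (by omega)
        have t3 : edist (y (N₂ + i + 1 + l₀)) (y (N₂ + i + l₀)) ≤ η := by
          have := step (N₂ + i + l₀) (by omega)
          rwa [show N₂ + i + l₀ + 1 = N₂ + i + 1 + l₀ by omega] at this
        calc H i ≤ edist (y (N₂ + i)) (y (N₂ + i + 1))
              + edist (y (N₂ + i + 1)) (y (N₂ + i + 1 + l₀))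
              + edist (y (N₂ + i + 1 + l₀)) (y (N₂ + i + l₀)) := edist_triangle4 _ _ _ _
          _ ≤ η + H (i + 1) + η := by
              refine add_le_add (add_le_add t1 (le_of_eq ?_)) t3
              rfl
          _ = H (i + 1) + 2 * η := by ring
      calc H 0 ≤ H i + 2 * (i : ℝ≥0∞) * η := ih
        _ ≤ (H (i + 1) + 2 * η) + 2 * (i : ℝ≥0∞) * η := add_le_add_left hstep _
        _ = H (i + 1) + 2 * ((i : ℕ) + 1 : ℝ≥0∞) * η := by ring
        _ = H (i + 1) + 2 * ((i + 1 : ℕ) : ℝ≥0∞) * η := by norm_cast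
  have hfinal : H 0 ≤ 3 * b := by
    calc H 0 ≤ H N₁ + 2 * (N₁ : ℝ≥0∞) * η := hchain N₁
      _ ≤ (2 * b + η) + 2 * (N₁ : ℝ≥0∞) * η := by
          refine add_le_add_left ?_ _
          rw [hHN₁]; exact hv
      _ = 2 * b + c * η := by
          rw [hcdef]; push_cast; ring
      _ = 2 * b + b := by rw [hηdef, ENNReal.mul_div_cancel hc0 hctop]
      _ = 3 * b := by ring
  have h34 : (3 : ℝ≥0∞) * b ≤ 4 * b := mul_le_mul_left (by norm_num) b
  exact absurd ((hH0.trans_le hfinal).trans_le h34) (lt_irrefl _)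

variable {X : Type*} [MetricSpace X]

/-- The induced map on nonempty compact subsets. -/
noncomputable def Phi (F : Set (X → X)) (hfin : F.Finite) (hcont : ∀ f ∈ F, Continuous f)
    (hF : F.Nonempty) (K : NonemptyCompacts X) : NonemptyCompacts X :=
  ⟨⟨⋃ f ∈ F, f '' (K : Set X),
      hfin.isCompact_biUnion fun f hf => K.isCompact.image (hcont f hf)⟩,
    Set.nonempty_biUnion.2 ⟨hF.choose, hF.choose_spec, K.nonempty.image _⟩⟩

theorem Phi_coe (F : Set (X → X)) (hfin : F.Finite) (hcont : ∀ f ∈ F, Continuous f)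
    (hF : F.Nonempty) (K : NonemptyCompacts X) :
    ((Phi F hfin hcont hF K : NonemptyCompacts X) : Set X) = ⋃ f ∈ F, f '' (K : Set X) := rfl

theorem NCedist_eq (A B : NonemptyCompacts X) :
    edist A B = Metric.hausdorffEDist (A : Set X) (B : Set X) := rfl

theorem iter_coe (F : Set (X → X)) (hfin : F.Finite) (hcont : ∀ f ∈ F, Continuous f)
    (hF : F.Nonempty) (n : ℕ) (K : NonemptyCompacts X) :
    (((Phi F hfin hcont hF)^[n] K : NonemptyCompacts X) : Set X)
      = ⋃ g ∈ comps F n, g '' (K : Set X) := by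
  induction n generalizing K with
  | zero => simp [comps]
  | succ n ih =>
    rw [Function.iterate_succ_apply, ih]
    ext x
    simp only [comps, Set.mem_iUnion, Set.mem_image2, exists_prop, Phi_coe]
    constructor
    · rintro ⟨g, hg, hx⟩
      obtain ⟨z, hz, rfl⟩ := hx
      simp only [Set.mem_iUnion, exists_prop] at hz
      obtain ⟨f, hf, a, ha, rfl⟩ := hz
      exact ⟨g ∘ f, ⟨g, hg, f, hf, rfl⟩, a, ha, rfl⟩
    · rintro ⟨h, ⟨g, hg, f, hf, rfl⟩, a, ha, rfl⟩
      refine ⟨g, hg, ⟨f a, ?_, rfl⟩⟩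
      simp only [Set.mem_iUnion, exists_prop]
      exact ⟨f, hf, a, ha, rfl⟩

theorem edist_le_oscFam {F : Set (X → X)} {n : ℕ} {t : ℝ≥0∞} {g : X → X}
    (hg : g ∈ comps F n) {a b : X} (hab : edist a b ≤ t) :
    edist (g a) (g b) ≤ oscFam (comps F n) t :=
  le_iSup_of_le g <| le_iSup_of_le hg <| le_iSup_of_le a <| le_iSup_of_le b <|
    le_iSup_of_le hab le_rfl

theorem iter_infEdist (F : Set (X → X)) (hfin : F.Finite) (hcont : ∀ f ∈ F, Continuous f)
    (hF : F.Nonempty) (n : ℕ) (t : ℝ≥0∞) (A B : NonemptyCompacts X)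
    (hAB : edist A B ≤ t) :
    ∀ x ∈ (((Phi F hfin hcont hF)^[n] A : NonemptyCompacts X) : Set X),
      infEdist x (((Phi F hfin hcont hF)^[n] B : NonemptyCompacts X) : Set X)
        ≤ oscFam (comps F n) t := by
  intro x hx
  rw [iter_coe] at hx
  simp only [Set.mem_iUnion, exists_prop] at hx
  obtain ⟨g, hg, a, ha, rfl⟩ := hx
  have hinf : infEdist a (B : Set X) ≤ t := by
    refine le_trans (infEdist_le_hausdorffEdist_of_mem ha) ?_
    rwa [← NCedist_eq]
  obtain ⟨bb, hbB, hab⟩ := B.isCompact.exists_infEdist_eq_edist B.nonempty a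
  have habt : edist a bb ≤ t := by rw [← hab]; exact hinf
  have hmem : g bb ∈ (((Phi F hfin hcont hF)^[n] B : NonemptyCompacts X) : Set X) := by
    rw [iter_coe]
    exact Set.mem_biUnion hg (Set.mem_image_of_mem g hbB)
  exact le_trans (infEdist_le_edist_of_mem hmem) (edist_le_oscFam hg habt)

theorem iter_edist_le (F : Set (X → X)) (hfin : F.Finite) (hcont : ∀ f ∈ F, Continuous f)
    (hF : F.Nonempty) (n : ℕ) (t : ℝ≥0∞) (A B : NonemptyCompacts X)
    (hAB : edist A B ≤ t) :
    edist ((Phi F hfin hcont hF)^[n] A) ((Phi F hfin hcont hF)^[n] B)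
      ≤ oscFam (comps F n) t := by
  rw [NCedist_eq]
  exact hausdorffEdist_le_of_infEdist
    (iter_infEdist F hfin hcont hF n t A B hAB)
    (iter_infEdist F hfin hcont hF n t B A (by rwa [edist_comm]))

end EventuallyContractingAux

open EventuallyContractingAux EMetric TopologicalSpace Set in
/-- If a finite family `F` of continuous self-maps of a complete metric space is eventually
contracting, then there is a nonempty compact set `K` with `F(K) ⊆ K`. -/
theorem exists_compact_invariant {X : Type*} [MetricSpace X] [CompleteSpace X] [Nonempty X]
    (F : Set (X → X)) (hfin : F.Finite) (hcont : ∀ f ∈ F, Continuous f)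
    (hev : ∀ t : ℝ≥0∞, 0 < t → t ≠ ⊤ →
      Tendsto (fun n => oscFam (comps F n) t) atTop (𝓝 0)) :
    ∃ K : Set X, K.Nonempty ∧ IsCompact K ∧ (⋃ f ∈ F, f '' K) ⊆ K := by
  obtain ⟨x₀⟩ := ‹Nonempty X›
  rcases F.eq_empty_or_nonempty with hF | hF
  · subst hF
    exact ⟨{x₀}, Set.singleton_nonempty _, isCompact_singleton, by simp⟩
  set Φ : NonemptyCompacts X → NonemptyCompacts X := Phi F hfin hcont hF with hΦ
  have hfe : ∀ A B : NonemptyCompacts X, edist A B ≠ ⊤ := fun A B => by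
    rw [NCedist_eq]
    exact Metric.hausdorffEdist_ne_top_of_nonempty_of_bounded A.nonempty B.nonempty
      A.isCompact.isBounded B.isCompact.isBounded
  have hoscΦ : ∀ t : ℝ≥0∞, 0 < t → t ≠ ⊤ → Tendsto (fun n => osc1 Φ n t) atTop (𝓝 0) := by
    intro t h0 ht
    refine tendsto_of_tendsto_of_tendsto_of_le_of_le tendsto_const_nhds (hev t h0 ht)
      (fun n => zero_le) (fun n => ?_)
    exact iSup_le fun A => iSup_le fun B => iSup_le fun hAB =>
      iter_edist_le F hfin hcont hF n t A B hAB
  set K₀ : NonemptyCompacts X := ⟨⟨{x₀}, isCompact_singleton⟩, Set.singleton_nonempty _⟩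
    with hK₀
  obtain ⟨C, hCtop, hC⟩ := bounded_orbit hfe Φ K₀ hoscΦ
  set U : Set X := ⋃ n, ((Φ^[n] K₀ : NonemptyCompacts X) : Set X) with hU
  have hUtb : TotallyBounded U := by
    rw [EMetric.totallyBounded_iff]
    intro ε hε
    have hε2 : 0 < ε / 2 := ENNReal.half_pos hε.ne'
    obtain ⟨N, hN⟩ : ∃ N, ∀ n ≥ N, oscFam (comps F n) (C + 1) < ε / 2 := by
      refine eventually_atTop.1 ((hev (C + 1) ?_ ?_).eventually_lt_const hε2)
      · exact lt_of_lt_of_le zero_lt_one le_add_self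
      · exact ENNReal.add_ne_top.2 ⟨hCtop, one_ne_top⟩
    have hA₁ : IsCompact (⋃ m ∈ Finset.range N, ((Φ^[m] K₀ : NonemptyCompacts X) : Set X)) :=
      (Finset.range N).finite_toSet.isCompact_biUnion fun m _ => (Φ^[m] K₀).isCompact
    obtain ⟨T₁, hT₁fin, hT₁⟩ := EMetric.totallyBounded_iff.1 hA₁.totallyBounded ε hε
    obtain ⟨T₂, hT₂fin, hT₂⟩ :=
      EMetric.totallyBounded_iff.1 (Φ^[N] K₀).isCompact.totallyBounded (ε / 2) hε2
    refine ⟨T₁ ∪ T₂, hT₁fin.union hT₂fin, ?_⟩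
    intro x hx
    obtain ⟨m, hxm⟩ := Set.mem_iUnion.1 hx
    rcases lt_or_ge m N with hmN | hNm
    · have hx1 : x ∈ ⋃ m ∈ Finset.range N, ((Φ^[m] K₀ : NonemptyCompacts X) : Set X) :=
        Set.mem_biUnion (Finset.mem_range.2 hmN) hxm
      obtain ⟨z, hz, hxz⟩ := by
        have := hT₁ hx1
        simpa only [Set.mem_iUnion, exists_prop] using this
      exact Set.mem_biUnion (Set.mem_union_left _ hz) hxz
    · obtain ⟨r, rfl⟩ := Nat.exists_eq_add_of_le hNm
      have hdist : edist (Φ^[N + r] K₀) (Φ^[N] K₀) < ε / 2 := by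
        have h1 : edist (Φ^[r] K₀) K₀ ≤ C + 1 := le_trans (hC r) le_self_add
        have h2 : edist (Φ^[N] (Φ^[r] K₀)) (Φ^[N] K₀) ≤ oscFam (comps F N) (C + 1) :=
          iter_edist_le F hfin hcont hF N (C + 1) _ _ h1
        rw [Function.iterate_add_apply]
        exact lt_of_le_of_lt h2 (hN N le_rfl)
      have hxinf : infEdist x ((Φ^[N] K₀ : NonemptyCompacts X) : Set X) < ε / 2 := by
        refine lt_of_le_of_lt (infEdist_le_hausdorffEdist_of_mem hxm) ?_
        rw [← NCedist_eq]
        exact hdist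
      obtain ⟨yy, hyy, hxy⟩ := infEdist_lt_iff.1 hxinf
      obtain ⟨z, hz, hyz⟩ := by
        have := hT₂ hyy
        simpa only [Set.mem_iUnion, exists_prop] using this
      have hxz : edist x z < ε := by
        calc edist x z ≤ edist x yy + edist yy z := edist_triangle _ _ _
          _ < ε / 2 + ε / 2 := ENNReal.add_lt_add hxy (EMetric.mem_ball.1 hyz)
          _ = ε := ENNReal.add_halves ε
      exact Set.mem_biUnion (Set.mem_union_right _ hz) (EMetric.mem_ball.2 hxz)
  have hKcpt : IsCompact (closure U) :=
    TotallyBounded.isCompact_of_isClosed hUtb.closure isClosed_closure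
  refine ⟨closure U, ?_, hKcpt, ?_⟩
  · refine ⟨x₀, subset_closure (Set.mem_iUnion.2 ⟨0, ?_⟩)⟩
    simp [hK₀]
  · refine Set.iUnion₂_subset fun f hf => ?_
    have h1 : f '' closure U ⊆ closure (f '' U) := image_closure_subset_closure_image (hcont f hf)
    have h2 : f '' U ⊆ U := by
      rw [hU, Set.image_iUnion]
      refine Set.iUnion_subset fun n => ?_
      refine subset_trans ?_ (Set.subset_iUnion
        (fun n => ((Φ^[n] K₀ : NonemptyCompacts X) : Set X)) (n + 1))
      rw [Function.iterate_succ_apply']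
      show f '' (((Φ^[n] K₀) : NonemptyCompacts X) : Set X)
        ⊆ ⋃ f' ∈ F, f' '' (((Φ^[n] K₀) : NonemptyCompacts X) : Set X)
      exact Set.subset_biUnion_of_mem
        (u := fun f' => f' '' (((Φ^[n] K₀) : NonemptyCompacts X) : Set X)) hf
    exact h1.trans (closure_mono h2)
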